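/- Let Ŝ(k) = (1/√(1+k²)) · [rows ((1+ik, 1+ik), (−i√(1+k²), i√(1+k²)))] for k ∈ ℝ. Then there exists a constant C > 0 such that for all k ∈ ℝ, the operator norm of Ŝ(k) and the operator norm of Ŝ(k)⁻¹ are both bounded by C; in particular sup_{k∈ℝ} ‖Ŝ(k)‖ + sup_{k∈ℝ} ‖Ŝ(k)⁻¹‖ < ∞. -/

import Mathlib

open Matrix

lemma opnorm_le_of_entries (A : Matrix (Fin 2) (Fin 2) ℂ) (c : ℝ)
    (h : ∀ i j, ‖A i j‖ ≤ c) :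
    ‖Matrix.toEuclideanCLM (𝕜 := ℂ) (n := Fin 2) A‖ ≤ 2 * c := by
  have hc : 0 ≤ c := le_trans (norm_nonneg _) (h 0 0)
  apply ContinuousLinearMap.opNorm_le_bound _ (by positivity)
  intro x
  set y := Matrix.toEuclideanCLM (𝕜 := ℂ) (n := Fin 2) A x with hy
  have hyi : ∀ i, y i = A.mulVec (fun j => x j) i := by
    intro i
    have := Matrix.ofLp_toEuclideanCLM (𝕜 := ℂ) (n := Fin 2) A x
    exact congrFun this i
  have hxn : ‖x‖ = Real.sqrt (‖x 0‖ ^ 2 + ‖x 1‖ ^ 2) := by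
    rw [EuclideanSpace.norm_eq, Fin.sum_univ_two]
  have hyn : ‖y‖ = Real.sqrt (‖y 0‖ ^ 2 + ‖y 1‖ ^ 2) := by
    rw [EuclideanSpace.norm_eq, Fin.sum_univ_two]
  have hybd : ∀ i, ‖y i‖ ≤ c * (‖x 0‖ + ‖x 1‖) := by
    intro i
    rw [hyi i, Matrix.mulVec, dotProduct, Fin.sum_univ_two]
    calc ‖A i 0 * x 0 + A i 1 * x 1‖ ≤ ‖A i 0 * x 0‖ + ‖A i 1 * x 1‖ := norm_add_le _ _
    _ = ‖A i 0‖ * ‖x 0‖ + ‖A i 1‖ * ‖x 1‖ := by rw [norm_mul, norm_mul]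
    _ ≤ c * ‖x 0‖ + c * ‖x 1‖ := by
        gcongr <;> [exact h i 0; exact h i 1]
    _ = c * (‖x 0‖ + ‖x 1‖) := by ring
  have hs : (‖x 0‖ + ‖x 1‖) ^ 2 ≤ 2 * ‖x‖ ^ 2 := by
    rw [hxn, Real.sq_sqrt (by positivity)]
    nlinarith [sq_nonneg (‖x 0‖ - ‖x 1‖)]
  rw [hyn]
  have : ‖y 0‖ ^ 2 + ‖y 1‖ ^ 2 ≤ (2 * c * ‖x‖) ^ 2 := by
    have h0 := hybd 0
    have h1 := hybd 1
    have hx0 : (0:ℝ) ≤ ‖x 0‖ + ‖x 1‖ := by positivity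
    nlinarith [norm_nonneg (y 0), norm_nonneg (y 1), norm_nonneg x, sq_nonneg c,
      mul_nonneg hc hx0]
  calc Real.sqrt (‖y 0‖ ^ 2 + ‖y 1‖ ^ 2) ≤ Real.sqrt ((2 * c * ‖x‖) ^ 2) :=
        Real.sqrt_le_sqrt this
  _ = 2 * c * ‖x‖ := Real.sqrt_sq (by positivity)

/-- Uniform boundedness of the diagonalizing matrices `Ŝ(k)` and `Ŝ(k)⁻¹`
(in the operator norm on `ℂ²` with the euclidean norm) over all `k ∈ ℝ`. -/
theorem diagonalizer_uniformly_bounded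
    (S : ℝ → Matrix (Fin 2) (Fin 2) ℂ)
    (hS : ∀ k : ℝ, S k =
      ((Real.sqrt (1 + k ^ 2) : ℂ))⁻¹ •
        !![1 + Complex.I * (k : ℂ), 1 + Complex.I * (k : ℂ);
           -Complex.I * (Real.sqrt (1 + k ^ 2) : ℂ),
            Complex.I * (Real.sqrt (1 + k ^ 2) : ℂ)]) :
    (∃ C : ℝ, 0 < C ∧ ∀ k : ℝ,
        ‖Matrix.toEuclideanCLM (𝕜 := ℂ) (n := Fin 2) (S k)‖ ≤ C ∧
        ‖Matrix.toEuclideanCLM (𝕜 := ℂ) (n := Fin 2) ((S k)⁻¹)‖ ≤ C)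
    ∧ BddAbove (Set.range fun k : ℝ =>
        ‖Matrix.toEuclideanCLM (𝕜 := ℂ) (n := Fin 2) (S k)‖ +
        ‖Matrix.toEuclideanCLM (𝕜 := ℂ) (n := Fin 2) ((S k)⁻¹)‖) := by
  have key : ∀ k : ℝ,
      ‖Matrix.toEuclideanCLM (𝕜 := ℂ) (n := Fin 2) (S k)‖ ≤ 2 ∧
      ‖Matrix.toEuclideanCLM (𝕜 := ℂ) (n := Fin 2) ((S k)⁻¹)‖ ≤ 2 := by
    intro k
    set r : ℝ := Real.sqrt (1 + k ^ 2) with hr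
    have hr1 : 1 ≤ r := by
      have := Real.sqrt_le_sqrt (show (1:ℝ) ≤ 1 + k ^ 2 by nlinarith [sq_nonneg k])
      rw [hr]
      calc (1:ℝ) = Real.sqrt 1 := by simp
      _ ≤ _ := Real.sqrt_le_sqrt (by nlinarith [sq_nonneg k])
    have hr0 : 0 < r := lt_of_lt_of_le one_pos hr1
    have hrC : (r : ℂ) ≠ 0 := by exact_mod_cast hr0.ne'
    have ha : (1 : ℂ) + Complex.I * k ≠ 0 := by
      intro h
      have := congrArg Complex.re h
      simp at this
    have hna : ‖(1 : ℂ) + Complex.I * k‖ = r := by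
      rw [show (1:ℂ) + Complex.I * k = ((1:ℝ) :ℂ) + ((k:ℝ):ℂ) * Complex.I by push_cast; ring,
        Complex.norm_add_mul_I, hr]
      norm_num
    have hnr : ‖((r:ℝ) : ℂ)‖ = r := by
      rw [Complex.norm_real, Real.norm_of_nonneg hr0.le]
    set B : Matrix (Fin 2) (Fin 2) ℂ :=
      !![(r : ℂ) / (2 * (1 + Complex.I * k)), Complex.I / 2;
         (r : ℂ) / (2 * (1 + Complex.I * k)), -(Complex.I / 2)] with hB
    have hinv : (S k)⁻¹ = B := by
      apply Matrix.inv_eq_right_inv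
      rw [hS k, Matrix.smul_mul]
      ext i j
      fin_cases i <;> fin_cases j <;>
        simp [hB, Matrix.mul_apply, Fin.sum_univ_two, Matrix.one_apply] <;>
        field_simp
      · rw [← hr, mul_div_cancel_left₀ _ hrC]; norm_num
      · linear_combination (-2 * ((Real.sqrt (1 + k ^ 2) : ℝ) : ℂ) * ((Real.sqrt (1 + k ^ 2) : ℝ) : ℂ)⁻¹) * Complex.I_sq + 2 * mul_inv_cancel₀ (show ((Real.sqrt (1 + k ^ 2) : ℝ) : ℂ) ≠ 0 from hrC)
    have hSbd : ∀ i j, ‖S k i j‖ ≤ 1 := by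
      intro i j
      rw [hS k]
      fin_cases i <;> fin_cases j <;>
        simp [norm_mul, hna, hnr, hr0.ne', Complex.norm_real,
          Real.norm_of_nonneg hr0.le, inv_mul_cancel₀ hr0.ne'] <;>
        simp [← hr, abs_of_pos hr0, hr0.ne']
    have hBbd : ∀ i j, ‖B i j‖ ≤ 1 := by
      intro i j
      have h1 : ‖(r : ℂ) / (2 * (1 + Complex.I * k))‖ = 1/2 := by
        rw [norm_div, hnr, norm_mul, hna]
        field_simp
        norm_num
      fin_cases i <;> fin_cases j <;>
        simp [hB, h1, norm_div] <;> norm_num <;>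
        rw [hna, abs_of_pos hr0, div_le_one (by linarith)] <;> linarith
    constructor
    · have := opnorm_le_of_entries (S k) 1 hSbd
      linarith
    · rw [hinv]
      have := opnorm_le_of_entries B 1 hBbd
      linarith
  refine ⟨⟨2, by norm_num, key⟩, ⟨4, ?_⟩⟩
  rintro y ⟨k, rfl⟩
  have := key k
  simp only
  linarith [this.1, this.2]
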